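/- Let r ≥ 3 be an integer, let G be a finite triangle-free 4-sunspot-free graph, and let (L_0, …, L_r) be an r-leveling in G such that the subgraph induced on L_r is liberal. Let H be a hole of length at least 6 in the subgraph induced on L_r and let x1–h1–h2–x2–x1 be an H-flap in G where h1, h2 ∈ V(H) and x1, x2 ∈ L_{r−1} ∪ L_r. Then x1, x2 ∈ L_r \ V(H). -/

import Mathlib

open SimpleGraph

/-- A `4`-sunspot in `G`: seven pairwise distinct vertices whose induced edge set is exactly
`{x₁x₂, x₂x₃, x₃x₄, x₄x₁, x₁y₁, x₂y₂, x₃y₃}`. -/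
def IsFourSunspot {V : Type} (G : SimpleGraph V) (x₁ x₂ x₃ x₄ y₁ y₂ y₃ : V) : Prop :=
  [x₁, x₂, x₃, x₄, y₁, y₂, y₃].Nodup ∧
  G.Adj x₁ x₂ ∧ G.Adj x₂ x₃ ∧ G.Adj x₃ x₄ ∧ G.Adj x₄ x₁ ∧
  G.Adj x₁ y₁ ∧ G.Adj x₂ y₂ ∧ G.Adj x₃ y₃ ∧
  ¬ G.Adj x₁ x₃ ∧ ¬ G.Adj x₂ x₄ ∧
  ¬ G.Adj x₁ y₂ ∧ ¬ G.Adj x₁ y₃ ∧ ¬ G.Adj x₂ y₁ ∧ ¬ G.Adj x₂ y₃ ∧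
  ¬ G.Adj x₃ y₁ ∧ ¬ G.Adj x₃ y₂ ∧ ¬ G.Adj x₄ y₁ ∧ ¬ G.Adj x₄ y₂ ∧ ¬ G.Adj x₄ y₃ ∧
  ¬ G.Adj y₁ y₂ ∧ ¬ G.Adj y₁ y₃ ∧ ¬ G.Adj y₂ y₃

/-- `G` is `4`-sunspot-free if there is no `4`-sunspot in `G`. -/
def FourSunspotFree {V : Type} (G : SimpleGraph V) : Prop :=
  ∀ x₁ x₂ x₃ x₄ y₁ y₂ y₃ : V, ¬ IsFourSunspot G x₁ x₂ x₃ x₄ y₁ y₂ y₃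

/-- The `t`-sun: a `t`-vertex cycle (on `Sum.inl` vertices) together with a pendant
(degree-one) neighbor `Sum.inr i` for each cycle vertex `Sum.inl i`. -/
def Sun (t : ℕ) : SimpleGraph (ZMod t ⊕ ZMod t) :=
  SimpleGraph.fromEdgeSet
    ((Set.range fun i : ZMod t => s(Sum.inl i, Sum.inl (i + 1))) ∪
     (Set.range fun i : ZMod t => s(Sum.inl i, Sum.inr i)))

/-- `G` is `t`-sun-free: no induced subgraph of `G` is a `t`-sun. -/
def SunFree (t : ℕ) {V : Type} (G : SimpleGraph V) : Prop :=
  IsEmpty (Sun t ↪g G)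

/-- The bull: a triangle `0,1,2` with pendant vertices `3` (adjacent to `0`)
and `4` (adjacent to `1`). -/
def Bull : SimpleGraph (Fin 5) :=
  SimpleGraph.fromEdgeSet {s(0, 1), s(1, 2), s(0, 2), s(0, 3), s(1, 4)}

/-- `G` is bull-free: no induced subgraph of `G` is a bull. -/
def BullFree {V : Type} (G : SimpleGraph V) : Prop :=
  IsEmpty (Bull ↪g G)

/-- A hole in `G`: an induced cycle on at least `4` vertices, given as a graph embedding
of the cycle graph. -/
structure Hole {V : Type} (G : SimpleGraph V) where
  len : ℕ
  four_le : 4 ≤ len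
  emb : SimpleGraph.cycleGraph len ↪g G

/-- The vertex set of a hole. -/
def Hole.verts {V : Type} {G : SimpleGraph V} (H : Hole G) : Set V :=
  Set.range H.emb

/-- The edge set of a hole. -/
def Hole.edges {V : Type} {G : SimpleGraph V} (H : Hole G) : Set (Sym2 V) :=
  {e | ∃ i j : Fin H.len, (SimpleGraph.cycleGraph H.len).Adj i j ∧ e = s(H.emb i, H.emb j)}

/-- `G` is liberal: for distinct non-adjacent `x, y`, neither dominates the other. -/
def Liberal {V : Type} (G : SimpleGraph V) : Prop :=
  ∀ x y : V, x ≠ y → ¬ G.Adj x y →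
    (G.neighborSet x \ G.neighborSet y).Nonempty ∧
    (G.neighborSet y \ G.neighborSet x).Nonempty

/-- `G` is non-degenerate: every vertex has degree at least `χ(G) - 1`. -/
def NonDegenerate {V : Type} (G : SimpleGraph V) : Prop :=
  ∀ v : V, G.chromaticNumber ≤ ((G.neighborSet v).ncard : ℕ∞) + 1

/-- `G` is flapless: for every hole `H` of length at least `6` in `G`, there is no `H`-flap,
i.e. no `4`-hole sharing an edge with `H`. -/
def Flapless {V : Type} (G : SimpleGraph V) : Prop :=
  ∀ H : Hole G, 6 ≤ H.len → ∀ F : Hole G, F.len = 4 → ∀ e ∈ F.edges, e ∉ H.edges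

/-- An `r`-leveling in `G`: pairwise disjoint nonempty sets `L 0, …, L r` such that every
vertex of `L i` (`i ≥ 1`) has a neighbor in `L (i-1)`, and edges only join consecutive levels. -/
def IsLeveling {V : Type} (G : SimpleGraph V) (r : ℕ) (L : ℕ → Set V) : Prop :=
  (∀ i, i ≤ r → (L i).Nonempty) ∧
  (∀ i j, i ≤ r → j ≤ r → i ≠ j → Disjoint (L i) (L j)) ∧
  (∀ i, 1 ≤ i → i ≤ r → ∀ v ∈ L i, ∃ u ∈ L (i - 1), G.Adj u v) ∧
  (∀ i j, i ≤ r → j ≤ r → i ≠ j →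
    ∀ u ∈ L i, ∀ v ∈ L j, G.Adj u v → i = j + 1 ∨ j = i + 1)

/-- `x` has no sector of length at most `2` in the hole `H`: there is no edge of `H` with both
ends adjacent to `x`, and no path of length `2` in `H` whose ends are adjacent to `x` and whose
middle vertex is not. -/
def NoSectorLenLe2 {V : Type} (G : SimpleGraph V) (H : Hole G) (x : V) : Prop :=
  (∀ i j : Fin H.len, (SimpleGraph.cycleGraph H.len).Adj i j →
      ¬ (G.Adj x (H.emb i) ∧ G.Adj x (H.emb j))) ∧
  (∀ i j k : Fin H.len, (SimpleGraph.cycleGraph H.len).Adj i j →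
      (SimpleGraph.cycleGraph H.len).Adj j k → i ≠ k →
      ¬ (G.Adj x (H.emb i) ∧ ¬ G.Adj x (H.emb j) ∧ G.Adj x (H.emb k)))

/-- `X` and `Y` are anticomplete in `G`: disjoint, with no edge between them. -/
def Anticomplete {V : Type} (G : SimpleGraph V) (X Y : Set V) : Prop :=
  Disjoint X Y ∧ ∀ x ∈ X, ∀ y ∈ Y, ¬ G.Adj x y

/-- An `H`-flare in `G`: to each vertex `H.emb i` of the hole `H`, assign a set `Φ i` of at
most one vertex, contained in the neighborhood of `H.emb i` and disjoint from `H`. -/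
structure IsFlare {V : Type} (G : SimpleGraph V) (H : Hole G) (Φ : Fin H.len → Set V) : Prop where
  subset_nbhd : ∀ i, Φ i ⊆ G.neighborSet (H.emb i) \ H.verts
  subsingleton : ∀ i, (Φ i).Subsingleton

/-- A flare is full if `|Φ i| = 1` for every `i`. -/
def IsFullFlare {V : Type} (G : SimpleGraph V) (H : Hole G) (Φ : Fin H.len → Set V) : Prop :=
  IsFlare G H Φ ∧ ∀ i, (Φ i).Nonempty

/-- A flare `Φ` is `d`-safe: for distinct hole vertices at distance at most `d` in `H`,
`Φ(h)` and `Φ[h'] = Φ(h') ∪ {h'}` are anticomplete in `G`. -/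
def DSafe {V : Type} (G : SimpleGraph V) (H : Hole G) (Φ : Fin H.len → Set V) (d : ℕ) : Prop :=
  ∀ i j : Fin H.len, i ≠ j → (SimpleGraph.cycleGraph H.len).dist i j ≤ d →
    Anticomplete G (Φ i) (Φ j ∪ {H.emb j})

section MyHelpers

variable {V : Type} {G : SimpleGraph V}

lemma noTri (htri : G.CliqueFree 3) {a b c : V}
    (h1 : G.Adj a b) (h2 : G.Adj b c) (h3 : G.Adj a c) : False :=
  by
  classical
  exact htri {a, b, c} (is3Clique_triple_iff.2 ⟨h1, h3, h2⟩)

/-- sunspot-free instance with distinctness derived from the adjacency pattern. -/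
lemma noSun (hspot : FourSunspotFree G)
    {x1 x2 x3 x4 y1 y2 y3 : V}
    (p1 : G.Adj x1 x2) (p2 : G.Adj x2 x3) (p3 : G.Adj x3 x4) (p4 : G.Adj x4 x1)
    (p5 : G.Adj x1 y1) (p6 : G.Adj x2 y2) (p7 : G.Adj x3 y3)
    (q1 : ¬G.Adj x1 x3) (q2 : ¬G.Adj x2 x4)
    (q3 : ¬G.Adj x1 y2) (q4 : ¬G.Adj x1 y3) (q5 : ¬G.Adj x2 y1) (q6 : ¬G.Adj x2 y3)
    (q7 : ¬G.Adj x3 y1) (q8 : ¬G.Adj x3 y2) (q9 : ¬G.Adj x4 y1) (q10 : ¬G.Adj x4 y2)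
    (q11 : ¬G.Adj x4 y3)
    (q12 : ¬G.Adj y1 y2) (q13 : ¬G.Adj y1 y3) (q14 : ¬G.Adj y2 y3) : False := by
  apply hspot x1 x2 x3 x4 y1 y2 y3
  have d12 : x1 ≠ x2 := p1.ne
  have d13 : x1 ≠ x3 := by rintro rfl; exact q7 p5
  have d14 : x1 ≠ x4 := p4.ne'
  have d1y1 : x1 ≠ y1 := p5.ne
  have d1y2 : x1 ≠ y2 := by rintro rfl; exact q10 p4
  have d1y3 : x1 ≠ y3 := by rintro rfl; exact q11 p4
  have d23 : x2 ≠ x3 := p2.ne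
  have d24 : x2 ≠ x4 := by rintro rfl; exact q10 p6
  have d2y1 : x2 ≠ y1 := by rintro rfl; exact q7 p2.symm
  have d2y2 : x2 ≠ y2 := p6.ne
  have d2y3 : x2 ≠ y3 := by rintro rfl; exact q4 p1
  have d34 : x3 ≠ x4 := p3.ne
  have d3y1 : x3 ≠ y1 := by rintro rfl; exact q5 p2
  have d3y2 : x3 ≠ y2 := by rintro rfl; exact q10 p3.symm
  have d3y3 : x3 ≠ y3 := p7.ne
  have d4y1 : x4 ≠ y1 := by rintro rfl; exact q7 p3
  have d4y2 : x4 ≠ y2 := by rintro rfl; exact q2 p6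
  have d4y3 : x4 ≠ y3 := by rintro rfl; exact q4 p4.symm
  have dy12 : y1 ≠ y2 := by rintro rfl; exact q3 p5
  have dy13 : y1 ≠ y3 := by rintro rfl; exact q4 p5
  have dy23 : y2 ≠ y3 := by rintro rfl; exact q6 p6
  refine ⟨?_, p1,p2,p3,p4,p5,p6,p7,q1,q2,q3,q4,q5,q6,q7,q8,q9,q10,q11,q12,q13,q14⟩
  simp only [List.nodup_cons, List.mem_cons, List.mem_singleton, List.not_mem_nil,
    List.nodup_nil, or_false, not_or, and_true]
  exact ⟨⟨d12,d13,d14,d1y1,d1y2,d1y3⟩, ⟨d23,d24,d2y1,d2y2,d2y3⟩, ⟨d34,d3y1,d3y2,d3y3⟩,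
    ⟨d4y1,d4y2,d4y3⟩, ⟨dy12,dy13⟩, ⟨dy23, not_false⟩⟩

end MyHelpers

section Window
open Fin.NatCast Fin.CommRing
variable {V : Type} {G : SimpleGraph V}

lemma fin_cast_val (m : ℕ) (d : ℕ) (hd : d < m + 6) : ((d : Fin (m+6)) : ℕ) = d :=
  Fin.val_cast_of_lt hd

lemma fin_cast_ne_zero (m : ℕ) {d : ℕ} (h1 : 1 ≤ d) (h5 : d ≤ 5) : (d : Fin (m+6)) ≠ 0 := by
  intro h
  have := fin_cast_val m d (by omega)
  rw [h] at this
  simp at this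
  omega

lemma fin_cast_ne_one (m : ℕ) {d : ℕ} (h1 : 2 ≤ d) (h5 : d ≤ 5) : (d : Fin (m+6)) ≠ 1 := by
  intro h
  have := fin_cast_val m d (by omega)
  rw [h] at this
  have h1v : ((1 : Fin (m+6)) : ℕ) = 1 := by
    have := fin_cast_val m 1 (by omega)
    simpa using this
  omega

lemma fin_neg_cast_ne_one (m : ℕ) {d : ℕ} (h1 : 1 ≤ d) (h5 : d ≤ 4) : -(d : Fin (m+6)) ≠ 1 := by
  intro h
  have hx : (d : Fin (m+6)) = -1 := by rwa [neg_eq_iff_eq_neg] at h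
  have h0 : ((d : Fin (m+6)) + 1) = 0 := by rw [hx]; exact neg_add_cancel 1
  have h0' : (((d+1 : ℕ)) : Fin (m+6)) = 0 := by push_cast; exact h0
  have := fin_cast_val m (d+1) (by omega)
  rw [h0'] at this
  simp at this

end Window

section W2
open Fin.NatCast Fin.CommRing
variable {V : Type} {G : SimpleGraph V}

lemma cycleGraph_neg_adj (m : ℕ) (a b : Fin (m+6)) (h : (cycleGraph (m+6)).Adj a b) :
    (cycleGraph (m+6)).Adj (-a) (-b) := by
  rw [cycleGraph_adj (n := m+4)] at h ⊢
  rcases h with h | h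
  · right; rw [← h]; ring
  · left; rw [← h]; ring

lemma key_window {m : ℕ} (e : cycleGraph (m+6) ↪g G)
    (p q : Fin (m+6)) (hpq : q - p = 1)
    (idx : ℕ → Fin (m+6)) (hdiff : ∀ k d : ℕ, idx (k+d) - idx k = (d : Fin (m+6)))
    (h3 : idx 3 = p) (h4 : idx 4 = q) :
    ∃ f : ℕ → V, f 3 = e p ∧ f 4 = e q ∧ (∀ k, f k ∈ Set.range e) ∧
      (∀ k, G.Adj (f k) (f (k+1))) ∧
      (∀ k d, 2 ≤ d → d ≤ 4 → ¬ G.Adj (f k) (f (k+d))) ∧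
      (∀ k d, 1 ≤ d → d ≤ 5 → f k ≠ f (k+d)) ∧
      (∀ x k, 1 ≤ k → x ∈ Set.range e → G.Adj x (f k) → x = f (k-1) ∨ x = f (k+1)) := by
  refine ⟨fun k => e (idx k), by show e (idx 3) = e p; rw [h3], by show e (idx 4) = e q; rw [h4], fun k => ⟨idx k, rfl⟩, ?_, ?_, ?_, ?_⟩
  · intro k
    rw [Embedding.map_adj_iff, cycleGraph_adj (n := m+4)]
    right
    have := hdiff k 1
    simpa using this
  · intro k d hd2 hd4 h
    rw [Embedding.map_adj_iff, cycleGraph_adj (n := m+4)] at h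
    rcases h with h | h
    · have h' : -((d : ℕ) : Fin (m+6)) = 1 := by rw [← hdiff k d, neg_sub]; exact h
      exact fin_neg_cast_ne_one m (by omega) (by omega) h'
    · rw [hdiff k d] at h
      exact fin_cast_ne_one m (by omega) (by omega) h
  · intro k d hd1 hd5 h
    have h' : idx k = idx (k + d) := e.injective h
    have := hdiff k d
    rw [← h', sub_self] at this
    exact fin_cast_ne_zero m (by omega) (by omega) this.symm
  · intro x k hk hx hxadj
    obtain ⟨s, rfl⟩ := hx
    rw [Embedding.map_adj_iff, cycleGraph_adj (n := m+4)] at hxadj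
    have hsucc : idx (k+1) = idx k + 1 := by
      have hh := hdiff k 1
      rw [sub_eq_iff_eq_add] at hh
      rw [hh]; push_cast; ring
    have hpred : idx (k-1) = idx k - 1 := by
      have h1 : (k - 1) + 1 = k := by omega
      have hh := hdiff (k-1) 1
      rw [h1, sub_eq_iff_eq_add] at hh
      rw [hh]; push_cast; ring
    rcases hxadj with h | h
    · rw [sub_eq_iff_eq_add] at h
      right
      congr 1
      rw [hsucc, h]; ring
    · rw [sub_eq_iff_eq_add] at h
      left
      congr 1
      rw [hpred, h]; ring

lemma exists_window {n m : ℕ} (hn : n = m + 6) (e : cycleGraph n ↪g G)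
    (p q : Fin n) (hadj : (cycleGraph n).Adj p q) :
    ∃ f : ℕ → V, f 3 = e p ∧ f 4 = e q ∧ (∀ k, f k ∈ Set.range e) ∧
      (∀ k, G.Adj (f k) (f (k+1))) ∧
      (∀ k d, 2 ≤ d → d ≤ 4 → ¬ G.Adj (f k) (f (k+d))) ∧
      (∀ k d, 1 ≤ d → d ≤ 5 → f k ≠ f (k+d)) ∧
      (∀ x k, 1 ≤ k → x ∈ Set.range e → G.Adj x (f k) → x = f (k-1) ∨ x = f (k+1)) := by
  subst hn
  have hadj' : p - q = 1 ∨ q - p = 1 := (cycleGraph_adj (n := m+4)).mp hadj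
  rcases hadj' with h | h
  · -- q = p - 1 ; use decreasing window idx k = p + 3 - k, via key_window is not directly
    -- possible, so use the negation trick: build a fresh embedding e' = e ∘ (neg)
    set ν : Fin (m+6) ≃ Fin (m+6) := Equiv.neg _ with hν
    have hmono : ∀ a b, (cycleGraph (m+6)).Adj (ν a) (ν b) ↔ (cycleGraph (m+6)).Adj a b := by
      intro a b
      constructor
      · intro hh
        have := cycleGraph_neg_adj m _ _ hh
        simpa [hν] using this
      · intro hh
        exact cycleGraph_neg_adj m _ _ hh
    set νiso : cycleGraph (m+6) ≃g cycleGraph (m+6) := ⟨ν, by intro a b; exact hmono a b⟩ with hνiso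
    set e' : cycleGraph (m+6) ↪g G := e.comp νiso.toEmbedding with he'
    have hrange : ∀ y, y ∈ Set.range e' ↔ y ∈ Set.range e := by
      intro y
      constructor
      · rintro ⟨s, rfl⟩; exact ⟨ν s, rfl⟩
      · rintro ⟨s, rfl⟩
        refine ⟨ν.symm s, ?_⟩
        show e (ν (ν.symm s)) = e s
        rw [Equiv.apply_symm_apply]
    have hpq' : (-q) - (-p) = 1 := by rw [← h]; ring
    obtain ⟨f, f3, f4, frange, fadj, fnadj, fne, fnbr⟩ :=
      key_window e' (-p) (-q) hpq' (fun k => -p + (k : Fin (m+6)) - 3)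
        (by intro k d; push_cast; ring) (by push_cast; ring)
        (by rw [sub_eq_iff_eq_add] at h; rw [h]; push_cast; ring)
    have hep : e' (-p) = e p := by show e (ν (-p)) = e p; simp [hν]
    have heq : e' (-q) = e q := by show e (ν (-q)) = e q; simp [hν]
    refine ⟨f, by rw [← hep, f3], by rw [← heq, f4], fun k => (hrange _).mp (frange k),
      fadj, fnadj, fne, ?_⟩
    intro x k hk hx hxadj
    exact fnbr x k hk ((hrange x).mpr hx) hxadj
  · exact key_window e p q h (fun k => p + (k : Fin (m+6)) - 3)
      (by intro k d; push_cast; ring) (by push_cast; ring)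
      (by rw [sub_eq_iff_eq_add] at h; rw [h]; push_cast; ring)

end W2

section Sector
variable {V : Type} {G : SimpleGraph V} {L : ℕ → Set V} {r : ℕ}

lemma lib_pick (hlib : Liberal (G.induce (L r))) {a b : V} (ha : a ∈ L r) (hb : b ∈ L r)
    (hne : a ≠ b) (hnadj : ¬ G.Adj a b) :
    (∃ z, z ∈ L r ∧ G.Adj a z ∧ ¬ G.Adj b z) ∧
    (∃ u, u ∈ L r ∧ G.Adj b u ∧ ¬ G.Adj a u) := by
  obtain ⟨h1, h2⟩ := hlib ⟨a, ha⟩ ⟨b, hb⟩ (by simpa [Subtype.ext_iff] using hne)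
    (by exact hnadj)
  obtain ⟨z, hz1, hz2⟩ := h1
  obtain ⟨u, hu1, hu2⟩ := h2
  exact ⟨⟨z.1, z.2, hz1, hz2⟩, ⟨u.1, u.2, hu1, hu2⟩⟩

lemma low_nonadj (hL : IsLeveling G r L) (hr : 3 ≤ r) {s y : V}
    (hs : s ∈ L (r-2)) (hy : y ∈ L r) : ¬ G.Adj s y := by
  intro h
  have := hL.2.2.2 (r-2) r (by omega) le_rfl (by omega) s hs y hy h
  omega

lemma chain_r (hL : IsLeveling G r L) (hr : 3 ≤ r) {x : V} (hx : x ∈ L r) :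
    ∃ t s, t ∈ L (r-1) ∧ s ∈ L (r-2) ∧ G.Adj t x ∧ G.Adj s t := by
  obtain ⟨t, ht, hta⟩ := hL.2.2.1 r (by omega) le_rfl x hx
  obtain ⟨s, hs, hsa⟩ := hL.2.2.1 (r-1) (by omega) (by omega) t ht
  have h2 : r - 1 - 1 = r - 2 := by omega
  rw [h2] at hs
  exact ⟨t, s, ht, hs, hta, hsa⟩

lemma chain_r1 (hL : IsLeveling G r L) (hr : 3 ≤ r) {x : V} (hx : x ∈ L (r-1)) :
    ∃ y, y ∈ L (r-2) ∧ G.Adj y x := by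
  obtain ⟨y, hy, hya⟩ := hL.2.2.1 (r-1) (by omega) (by omega) x hx
  have h2 : r - 1 - 1 = r - 2 := by omega
  rw [h2] at hy
  exact ⟨y, hy, hya⟩

/-- no vertex of `L (r-1)` sees two hole vertices at distance 2. -/
lemma sector_r1 (htri : G.CliqueFree 3) (hspot : FourSunspotFree G)
    (hL : IsLeveling G r L) (hr : 3 ≤ r) {a0 a1 a2 a3 a4 v : V}
    (m0 : a0 ∈ L r) (m1 : a1 ∈ L r) (m2 : a2 ∈ L r) (m3 : a3 ∈ L r) (m4 : a4 ∈ L r)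
    (e01 : G.Adj a0 a1) (e12 : G.Adj a1 a2) (e23 : G.Adj a2 a3) (e34 : G.Adj a3 a4)
    (n02 : ¬ G.Adj a0 a2) (n03 : ¬ G.Adj a0 a3) (n04 : ¬ G.Adj a0 a4)
    (n13 : ¬ G.Adj a1 a3) (n14 : ¬ G.Adj a1 a4) (n24 : ¬ G.Adj a2 a4)
    (hv : v ∈ L (r-1)) (va1 : G.Adj v a1) (va3 : G.Adj v a3) : False := by
  obtain ⟨y, hy, hyv⟩ := chain_r1 hL hr hv
  have low : ∀ w, w ∈ L r → ¬ G.Adj y w := fun w hw => low_nonadj hL hr hy hw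
  have nva2 : ¬ G.Adj v a2 := fun h => noTri htri va1 e12 h
  have nva0 : ¬ G.Adj v a0 := fun h => noTri htri va1 e01.symm h
  have nva4 : ¬ G.Adj v a4 := fun h => noTri htri va3 e34 h
  exact noSun hspot va1.symm va3 e23.symm e12.symm e01.symm hyv.symm e34
    n13 nva2 (fun h => low a1 m1 h.symm) n14 nva0 nva4
    (fun h => n03 h.symm) (fun h => low a3 m3 h.symm) (fun h => n02 h.symm)
    (fun h => low a2 m2 h.symm) n24 (fun h => low a0 m0 h.symm) n04 (low a4 m4)

/-- no vertex of `L r` (other than the midpoint) sees two hole vertices at distance 2. -/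
lemma sector_r (htri : G.CliqueFree 3) (hspot : FourSunspotFree G)
    (hL : IsLeveling G r L) (hr : 3 ≤ r) (hlib : Liberal (G.induce (L r)))
    {a0 a1 a2 a3 a4 a5 a6 v : V}
    (m0 : a0 ∈ L r) (m1 : a1 ∈ L r) (m2 : a2 ∈ L r) (m3 : a3 ∈ L r) (m4 : a4 ∈ L r) (m5 : a5 ∈ L r) (m6 : a6 ∈ L r)
    (e_a0_a1 : G.Adj a0 a1)
    (e_a1_a2 : G.Adj a1 a2)
    (e_a2_a3 : G.Adj a2 a3)
    (e_a3_a4 : G.Adj a3 a4)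
    (e_a4_a5 : G.Adj a4 a5)
    (e_a5_a6 : G.Adj a5 a6)
    (n_a0_a2 : ¬ G.Adj a0 a2)
    (n_a0_a3 : ¬ G.Adj a0 a3)
    (n_a0_a4 : ¬ G.Adj a0 a4)
    (n_a1_a3 : ¬ G.Adj a1 a3)
    (n_a1_a4 : ¬ G.Adj a1 a4)
    (n_a1_a5 : ¬ G.Adj a1 a5)
    (n_a2_a4 : ¬ G.Adj a2 a4)
    (n_a2_a5 : ¬ G.Adj a2 a5)
    (n_a2_a6 : ¬ G.Adj a2 a6)
    (n_a3_a5 : ¬ G.Adj a3 a5)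
    (n_a3_a6 : ¬ G.Adj a3 a6)
    (n_a4_a6 : ¬ G.Adj a4 a6)
    (hvm : v ∈ L r) (hne3 : v ≠ a3)
    (e_a2_v' : G.Adj v a2) (e_a4_v' : G.Adj v a4) : False := by
  have e_a2_v : G.Adj a2 v := e_a2_v'.symm
  have e_a4_v : G.Adj a4 v := e_a4_v'.symm
  have n_v_a3 : ¬ G.Adj v a3 := fun h => noTri htri e_a3_a4 e_a4_v h.symm
  obtain ⟨⟨z, hzm, e_v_z, n_a3_z⟩, ⟨u, hum, e_a3_u, n_v_u⟩⟩ :=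
    lib_pick hlib hvm m3 hne3 n_v_a3
  obtain ⟨t, s, htm, hsm, ht3, hst⟩ := chain_r hL hr m3
  have e_a3_t : G.Adj a3 t := ht3.symm
  have e_t_s : G.Adj t s := hst.symm
  have low : ∀ w, w ∈ L r → ¬ G.Adj w s := fun w hw h => low_nonadj hL hr hsm hw h.symm
  have n_a0_s := low a0 m0
  have n_a1_s := low a1 m1
  have n_a2_s := low a2 m2
  have n_a3_s := low a3 m3
  have n_a4_s := low a4 m4
  have n_a5_s := low a5 m5
  have n_a6_s := low a6 m6
  have n_v_s := low v hvm
  have n_z_s := low z hzm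
  have n_u_s := low u hum
  by_cases h_a1_v : G.Adj a1 v
  · -- adj
    have e_a1_v := h_a1_v
    exact noTri htri e_a1_a2 e_a2_v e_a1_v
  · -- nonadj
    have n_a1_v := h_a1_v
    by_cases h_a2_t : G.Adj a2 t
    · -- adj
      have e_a2_t := h_a2_t
      exact noTri htri e_a2_a3 e_a3_t e_a2_t
    · -- nonadj
      have n_a2_t := h_a2_t
      by_cases h_a3_v : G.Adj a3 v
      · -- adj
        have e_a3_v := h_a3_v
        exact noTri htri e_a3_a4 e_a4_v e_a3_v
      · -- nonadj
        have n_a3_v := h_a3_v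
        by_cases h_a4_u : G.Adj a4 u
        · -- adj
          have e_a4_u := h_a4_u
          exact noTri htri e_a3_a4 e_a4_u e_a3_u
        · -- nonadj
          have n_a4_u := h_a4_u
          by_cases h_a4_t : G.Adj a4 t
          · -- adj
            have e_a4_t := h_a4_t
            exact noTri htri e_a3_a4 e_a4_t e_a3_t
          · -- nonadj
            have n_a4_t := h_a4_t
            by_cases h_a5_v : G.Adj a5 v
            · -- adj
              have e_a5_v := h_a5_v
              exact noTri htri e_a4_a5 e_a5_v e_a4_v
            · -- nonadj
              have n_a5_v := h_a5_v
              by_cases h_a4_z : G.Adj a4 z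
              · -- adj
                have e_a4_z := h_a4_z
                exact noTri htri e_a4_v e_v_z e_a4_z
              · -- nonadj
                have n_a4_z := h_a4_z
                by_cases h_u_t : G.Adj u t
                · -- adj
                  have e_u_t := h_u_t
                  exact noTri htri e_a3_u e_u_t e_a3_t
                · -- nonadj
                  have n_u_t := h_u_t
                  by_cases h_z_t : G.Adj z t
                  · -- adj
                    have e_z_t := h_z_t
                    by_cases h_v_t : G.Adj v t
                    · -- adj
                      have e_v_t := h_v_t
                      exact noTri htri e_v_z e_z_t e_v_t
                    · -- nonadj
                      have n_v_t := h_v_t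
                      by_cases h_a1_t : G.Adj a1 t
                      · -- adj
                        have e_a1_t := h_a1_t
                        by_cases h_a0_t : G.Adj a0 t
                        · -- adj
                          have e_a0_t := h_a0_t
                          exact noTri htri e_a0_a1 e_a1_t e_a0_t
                        · -- nonadj
                          have n_a0_t := h_a0_t
                          exact noSun hspot e_a1_t e_a3_t.symm e_a2_a3.symm e_a1_a2.symm e_a0_a1.symm e_t_s e_a3_a4 n_a1_a3 (fun hh => n_a2_t hh.symm) n_a1_s n_a1_a4 (fun hh => n_a0_t hh.symm) (fun hh => n_a4_t hh.symm) (fun hh => n_a0_a3 hh.symm) n_a3_s (fun hh => n_a0_a2 hh.symm) n_a2_s n_a2_a4 n_a0_s n_a0_a4 (fun hh => n_a4_s hh.symm)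
                      · -- nonadj
                        have n_a1_t := h_a1_t
                        by_cases h_a5_t : G.Adj a5 t
                        · -- adj
                          have e_a5_t := h_a5_t
                          by_cases h_a6_t : G.Adj a6 t
                          · -- adj
                            have e_a6_t := h_a6_t
                            exact noTri htri e_a5_a6 e_a6_t e_a5_t
                          · -- nonadj
                            have n_a6_t := h_a6_t
                            exact noSun hspot e_a3_t e_a5_t.symm e_a4_a5.symm e_a3_a4.symm e_a2_a3.symm e_t_s e_a5_a6 n_a3_a5 (fun hh => n_a4_t hh.symm) n_a3_s n_a3_a6 (fun hh => n_a2_t hh.symm) (fun hh => n_a6_t hh.symm) (fun hh => n_a2_a5 hh.symm) n_a5_s (fun hh => n_a2_a4 hh.symm) n_a4_s n_a4_a6 n_a2_s n_a2_a6 (fun hh => n_a6_s hh.symm)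
                        · -- nonadj
                          have n_a5_t := h_a5_t
                          exact noSun hspot e_a2_a3 e_a3_a4 e_a4_v e_a2_v.symm e_a1_a2.symm e_a3_t e_a4_a5 n_a2_a4 n_a3_v n_a2_t n_a2_a5 (fun hh => n_a1_a3 hh.symm) n_a3_a5 (fun hh => n_a1_a4 hh.symm) n_a4_t (fun hh => n_a1_v hh.symm) n_v_t (fun hh => n_a5_v hh.symm) n_a1_t n_a1_a5 (fun hh => n_a5_t hh.symm)
                  · -- nonadj
                    have n_z_t := h_z_t
                    by_cases h_a1_t : G.Adj a1 t
                    · -- adj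
                      have e_a1_t := h_a1_t
                      by_cases h_a0_t : G.Adj a0 t
                      · -- adj
                        have e_a0_t := h_a0_t
                        exact noTri htri e_a0_a1 e_a1_t e_a0_t
                      · -- nonadj
                        have n_a0_t := h_a0_t
                        exact noSun hspot e_a1_t e_a3_t.symm e_a2_a3.symm e_a1_a2.symm e_a0_a1.symm e_t_s e_a3_a4 n_a1_a3 (fun hh => n_a2_t hh.symm) n_a1_s n_a1_a4 (fun hh => n_a0_t hh.symm) (fun hh => n_a4_t hh.symm) (fun hh => n_a0_a3 hh.symm) n_a3_s (fun hh => n_a0_a2 hh.symm) n_a2_s n_a2_a4 n_a0_s n_a0_a4 (fun hh => n_a4_s hh.symm)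
                    · -- nonadj
                      have n_a1_t := h_a1_t
                      by_cases h_v_t : G.Adj v t
                      · -- adj
                        have e_v_t := h_v_t
                        by_cases h_z_u : G.Adj z u
                        · -- adj
                          have e_z_u := h_z_u
                          by_cases h_a5_z : G.Adj a5 z
                          · -- adj
                            have e_a5_z := h_a5_z
                            by_cases h_a5_u : G.Adj a5 u
                            · -- adj
                              have e_a5_u := h_a5_u
                              exact noTri htri e_a5_z e_z_u e_a5_u
                            · -- nonadj
                              have n_a5_u := h_a5_u
                              by_cases h_a5_t : G.Adj a5 t
                              · -- adj
                                have e_a5_t := h_a5_t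
                                by_cases h_a6_t : G.Adj a6 t
                                · -- adj
                                  have e_a6_t := h_a6_t
                                  exact noTri htri e_a5_a6 e_a6_t e_a5_t
                                · -- nonadj
                                  have n_a6_t := h_a6_t
                                  exact noSun hspot e_a3_t e_a5_t.symm e_a4_a5.symm e_a3_a4.symm e_a2_a3.symm e_t_s e_a5_a6 n_a3_a5 (fun hh => n_a4_t hh.symm) n_a3_s n_a3_a6 (fun hh => n_a2_t hh.symm) (fun hh => n_a6_t hh.symm) (fun hh => n_a2_a5 hh.symm) n_a5_s (fun hh => n_a2_a4 hh.symm) n_a4_s n_a4_a6 n_a2_s n_a2_a6 (fun hh => n_a6_s hh.symm)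
                              · -- nonadj
                                have n_a5_t := h_a5_t
                                exact noSun hspot e_a3_a4.symm e_a3_t e_v_t.symm e_a4_v.symm e_a4_a5 e_a3_u e_t_s n_a4_t n_a3_v n_a4_u n_a4_s n_a3_a5 n_a3_s (fun hh => n_a5_t hh.symm) (fun hh => n_u_t hh.symm) (fun hh => n_a5_v hh.symm) n_v_u n_v_s n_a5_u n_a5_s n_u_s
                          · -- nonadj
                            have n_a5_z := h_a5_z
                            by_cases h_a5_t : G.Adj a5 t
                            · -- adj
                              have e_a5_t := h_a5_t
                              by_cases h_a6_t : G.Adj a6 t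
                              · -- adj
                                have e_a6_t := h_a6_t
                                exact noTri htri e_a5_a6 e_a6_t e_a5_t
                              · -- nonadj
                                have n_a6_t := h_a6_t
                                exact noSun hspot e_a3_t e_a5_t.symm e_a4_a5.symm e_a3_a4.symm e_a2_a3.symm e_t_s e_a5_a6 n_a3_a5 (fun hh => n_a4_t hh.symm) n_a3_s n_a3_a6 (fun hh => n_a2_t hh.symm) (fun hh => n_a6_t hh.symm) (fun hh => n_a2_a5 hh.symm) n_a5_s (fun hh => n_a2_a4 hh.symm) n_a4_s n_a4_a6 n_a2_s n_a2_a6 (fun hh => n_a6_s hh.symm)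
                            · -- nonadj
                              have n_a5_t := h_a5_t
                              exact noSun hspot e_a4_v e_v_t e_a3_t.symm e_a3_a4 e_a4_a5 e_v_z e_t_s n_a4_t (fun hh => n_a3_v hh.symm) n_a4_z n_a4_s (fun hh => n_a5_v hh.symm) n_v_s (fun hh => n_a5_t hh.symm) (fun hh => n_z_t hh.symm) n_a3_a5 n_a3_z n_a3_s n_a5_z n_a5_s n_z_s
                        · -- nonadj
                          have n_z_u := h_z_u
                          exact noSun hspot e_a3_t e_v_t.symm e_a4_v.symm e_a3_a4.symm e_a3_u e_t_s e_v_z n_a3_v (fun hh => n_a4_t hh.symm) n_a3_s n_a3_z (fun hh => n_u_t hh.symm) (fun hh => n_z_t hh.symm) n_v_u n_v_s n_a4_u n_a4_s n_a4_z n_u_s (fun hh => n_z_u hh.symm) (fun hh => n_z_s hh.symm)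
                      · -- nonadj
                        have n_v_t := h_v_t
                        by_cases h_a5_t : G.Adj a5 t
                        · -- adj
                          have e_a5_t := h_a5_t
                          by_cases h_a6_t : G.Adj a6 t
                          · -- adj
                            have e_a6_t := h_a6_t
                            exact noTri htri e_a5_a6 e_a6_t e_a5_t
                          · -- nonadj
                            have n_a6_t := h_a6_t
                            exact noSun hspot e_a3_t e_a5_t.symm e_a4_a5.symm e_a3_a4.symm e_a2_a3.symm e_t_s e_a5_a6 n_a3_a5 (fun hh => n_a4_t hh.symm) n_a3_s n_a3_a6 (fun hh => n_a2_t hh.symm) (fun hh => n_a6_t hh.symm) (fun hh => n_a2_a5 hh.symm) n_a5_s (fun hh => n_a2_a4 hh.symm) n_a4_s n_a4_a6 n_a2_s n_a2_a6 (fun hh => n_a6_s hh.symm)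
                        · -- nonadj
                          have n_a5_t := h_a5_t
                          exact noSun hspot e_a2_a3 e_a3_a4 e_a4_v e_a2_v.symm e_a1_a2.symm e_a3_t e_a4_a5 n_a2_a4 n_a3_v n_a2_t n_a2_a5 (fun hh => n_a1_a3 hh.symm) n_a3_a5 (fun hh => n_a1_a4 hh.symm) n_a4_t (fun hh => n_a1_v hh.symm) n_v_t (fun hh => n_a5_v hh.symm) n_a1_t n_a1_a5 (fun hh => n_a5_t hh.symm)

end Sector

section MainCore
variable {V : Type} {G : SimpleGraph V} {L : ℕ → Set V} {r : ℕ}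

lemma main_core (htri : G.CliqueFree 3) (hspot : FourSunspotFree G)
    (hL : IsLeveling G r L) (hr : 3 ≤ r) (hlib : Liberal (G.induce (L r)))
    (Hverts : Set V) (hHsub : Hverts ⊆ L r)
    (f : ℕ → V) (hfr : ∀ k, f k ∈ Hverts)
    (fadj : ∀ k, G.Adj (f k) (f (k+1)))
    (fgap : ∀ k d, 2 ≤ d → d ≤ 4 → ¬ G.Adj (f k) (f (k+d)))
    (fnbr : ∀ x k, 1 ≤ k → x ∈ Hverts → G.Adj x (f k) → x = f (k-1) ∨ x = f (k+1))
    (x₁ x₂ : V) (ha1 : G.Adj x₁ (f 3)) (ha2 : G.Adj (f 4) x₂) (ha3 : G.Adj x₂ x₁)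
    (hn1 : ¬ G.Adj x₁ (f 4)) (hn2 : ¬ G.Adj (f 3) x₂) (hne1 : x₁ ≠ f 4) (hne2 : x₂ ≠ f 3)
    (hx₁ : x₁ ∈ L (r-1) ∪ L r) (hx₂ : x₂ ∈ L (r-1) ∪ L r) :
    x₁ ∈ L r \ Hverts ∧ x₂ ∈ L r \ Hverts := by
  have M : ∀ k, f k ∈ L r := fun k => hHsub (hfr k)
  -- gap facts
  have g02 : ¬ G.Adj (f 0) (f 2) := fgap 0 2 (by norm_num) (by norm_num)
  have g03 : ¬ G.Adj (f 0) (f 3) := fgap 0 3 (by norm_num) (by norm_num)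
  have g04 : ¬ G.Adj (f 0) (f 4) := fgap 0 4 (by norm_num) (by norm_num)
  have g13 : ¬ G.Adj (f 1) (f 3) := fgap 1 2 (by norm_num) (by norm_num)
  have g14 : ¬ G.Adj (f 1) (f 4) := fgap 1 3 (by norm_num) (by norm_num)
  have g15 : ¬ G.Adj (f 1) (f 5) := fgap 1 4 (by norm_num) (by norm_num)
  have g24 : ¬ G.Adj (f 2) (f 4) := fgap 2 2 (by norm_num) (by norm_num)
  have g25 : ¬ G.Adj (f 2) (f 5) := fgap 2 3 (by norm_num) (by norm_num)
  have g26 : ¬ G.Adj (f 2) (f 6) := fgap 2 4 (by norm_num) (by norm_num)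
  have g35 : ¬ G.Adj (f 3) (f 5) := fgap 3 2 (by norm_num) (by norm_num)
  have g36 : ¬ G.Adj (f 3) (f 6) := fgap 3 3 (by norm_num) (by norm_num)
  have g37 : ¬ G.Adj (f 3) (f 7) := fgap 3 4 (by norm_num) (by norm_num)
  have g46 : ¬ G.Adj (f 4) (f 6) := fgap 4 2 (by norm_num) (by norm_num)
  have g47 : ¬ G.Adj (f 4) (f 7) := fgap 4 3 (by norm_num) (by norm_num)
  have g57 : ¬ G.Adj (f 5) (f 7) := fgap 5 2 (by norm_num) (by norm_num)
  -- if x₂ sees both f 2 and f 4 (in either level), contradiction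
  have sec2 : ∀ w, w ∈ L (r-1) ∪ L r → w ≠ f 3 → G.Adj w (f 2) → G.Adj w (f 4) → False := by
    intro w hw hwne w2 w4
    rcases hw with hw | hw
    · exact sector_r1 htri hspot hL hr (M 1) (M 2) (M 3) (M 4) (M 5)
        (fadj 1) (fadj 2) (fadj 3) (fadj 4) g13 g14 g15 g24 g25 g35 hw w2 w4
    · exact sector_r htri hspot hL hr hlib (M 0) (M 1) (M 2) (M 3) (M 4) (M 5) (M 6)
        (fadj 0) (fadj 1) (fadj 2) (fadj 3) (fadj 4) (fadj 5)
        g02 g03 g04 g13 g14 g15 g24 g25 g26 g35 g36 g46 hw hwne w2 w4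
  -- if x₁ sees both f 3 and f 5 (in either level), contradiction
  have sec3 : ∀ w, w ∈ L (r-1) ∪ L r → w ≠ f 4 → G.Adj w (f 3) → G.Adj w (f 5) → False := by
    intro w hw hwne w3 w5
    rcases hw with hw | hw
    · exact sector_r1 htri hspot hL hr (M 2) (M 3) (M 4) (M 5) (M 6)
        (fadj 2) (fadj 3) (fadj 4) (fadj 5) g24 g25 g26 g35 g36 g46 hw w3 w5
    · exact sector_r htri hspot hL hr hlib (M 1) (M 2) (M 3) (M 4) (M 5) (M 6) (M 7)
        (fadj 1) (fadj 2) (fadj 3) (fadj 4) (fadj 5) (fadj 6)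
        g13 g14 g15 g24 g25 g26 g35 g36 g37 g46 g47 g57 hw hwne w3 w5
  -- x₁ is not a hole vertex
  have notH1 : x₁ ∉ Hverts := by
    intro hmem
    have h12 : x₁ = f 2 ∨ x₁ = f 4 := fnbr x₁ 3 (by norm_num) hmem ha1
    have h12' : x₁ = f 2 := by rcases h12 with h | h; exact h; exact absurd h hne1
    refine sec2 x₂ hx₂ hne2 ?_ ha2.symm
    rw [← h12']; exact ha3
  -- x₂ is not a hole vertex
  have notH2 : x₂ ∉ Hverts := by
    intro hmem
    have h12 : x₂ = f 3 ∨ x₂ = f 5 := fnbr x₂ 4 (by norm_num) hmem ha2.symm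
    have h12' : x₂ = f 5 := by rcases h12 with h | h; exact absurd h hne2; exact h
    refine sec3 x₁ hx₁ hne1 ha1 ?_
    rw [← h12']; exact ha3.symm
  -- x₂ ∈ L r
  have inLr2 : x₂ ∈ L r := by
    rcases hx₂ with hw | hw
    swap
    · exact hw
    exfalso
    have nx22 : ¬ G.Adj x₂ (f 2) := fun h => sec2 x₂ (Or.inl hw) hne2 h ha2.symm
    have nx15 : ¬ G.Adj x₁ (f 5) := fun h => sec3 x₁ hx₁ hne1 ha1 h
    obtain ⟨y, hy, hy2⟩ := chain_r1 hL hr hw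
    have low : ∀ w, w ∈ L r → ¬ G.Adj w y := fun w hwm h => low_nonadj hL hr hy hwm h.symm
    have nx1y : ¬ G.Adj x₁ y := fun h => noTri htri ha3.symm hy2.symm h
    have nx25 : ¬ G.Adj x₂ (f 5) := fun h => noTri htri ha2 h (fadj 4)
    have nx12 : ¬ G.Adj x₁ (f 2) := fun h => noTri htri ha1 (fadj 2).symm h
    exact noSun hspot (fadj 3) ha2 ha3 ha1 (fadj 2).symm (fadj 4) hy2.symm
      hn2 (fun h => hn1 h.symm) g35 (low (f 3) (M 3)) (fun h => g24 h.symm)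
      (low (f 4) (M 4)) nx22 nx25 nx12 nx15 nx1y g25 (low (f 2) (M 2)) (low (f 5) (M 5))
  -- x₁ ∈ L r
  have inLr1 : x₁ ∈ L r := by
    rcases hx₁ with hw | hw
    swap
    · exact hw
    exfalso
    have nx15 : ¬ G.Adj x₁ (f 5) := fun h => sec3 x₁ (Or.inl hw) hne1 ha1 h
    have nx22 : ¬ G.Adj x₂ (f 2) := fun h => sec2 x₂ (Or.inr inLr2) hne2 h ha2.symm
    obtain ⟨y, hy, hy1⟩ := chain_r1 hL hr hw
    have low : ∀ w, w ∈ L r → ¬ G.Adj w y := fun w hwm h => low_nonadj hL hr hy hwm h.symm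
    have nx2y : ¬ G.Adj x₂ y := fun h => noTri htri ha3 hy1.symm h
    have nx25 : ¬ G.Adj x₂ (f 5) := fun h => noTri htri ha2 h (fadj 4)
    have nx12 : ¬ G.Adj x₁ (f 2) := fun h => noTri htri ha1 (fadj 2).symm h
    exact noSun hspot (fadj 3).symm ha1.symm ha3.symm ha2.symm (fadj 4) (fadj 2).symm hy1.symm
      (fun h => hn1 h.symm) hn2 (fun h => g24 h.symm) (low (f 4) (M 4)) g35
      (low (f 3) (M 3)) nx15 nx12 nx25 nx22 nx2y (fun h => g25 h.symm)
      (low (f 5) (M 5)) (low (f 2) (M 2))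
  exact ⟨⟨inLr1, notH1⟩, ⟨inLr2, notH2⟩⟩

end MainCore

/-- Let `r ≥ 3`, let `G` be finite, triangle-free and `4`-sunspot-free, let
`(L 0, …, L r)` be an `r`-leveling in `G` such that the subgraph induced on `L r` is liberal,
let `H` be a hole of length at least `6` in the subgraph induced on `L r`, and let
`x₁ - h₁ - h₂ - x₂ - x₁` be an `H`-flap in `G` (a `4`-hole sharing the edge `h₁h₂` with `H`)
with `h₁, h₂ ∈ V(H)` and `x₁, x₂ ∈ L (r-1) ∪ L r`. Then `x₁, x₂ ∈ L r \ V(H)`. -/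
theorem stmt_10 {V : Type} [Fintype V] (r : ℕ) (hr : 3 ≤ r) (G : SimpleGraph V)
    (htri : G.CliqueFree 3)
    (hspot : FourSunspotFree G)
    (L : ℕ → Set V) (hL : IsLeveling G r L)
    (hlib : Liberal (G.induce (L r)))
    (H : Hole G) (hHsub : H.verts ⊆ L r) (hHlen : 6 ≤ H.len)
    (x₁ x₂ h₁ h₂ : V)
    (hedge : s(h₁, h₂) ∈ H.edges)
    (ha1 : G.Adj x₁ h₁) (ha2 : G.Adj h₂ x₂) (ha3 : G.Adj x₂ x₁)
    (hn1 : ¬ G.Adj x₁ h₂) (hn2 : ¬ G.Adj h₁ x₂) (hne1 : x₁ ≠ h₂) (hne2 : x₂ ≠ h₁)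
    (hx₁ : x₁ ∈ L (r - 1) ∪ L r) (hx₂ : x₂ ∈ L (r - 1) ∪ L r) :
    x₁ ∈ L r \ H.verts ∧ x₂ ∈ L r \ H.verts := by
  obtain ⟨m, hm⟩ : ∃ m, H.len = m + 6 := ⟨H.len - 6, by omega⟩
  obtain ⟨i, j, hij, hsym⟩ := hedge
  rw [Sym2.eq_iff] at hsym
  rcases hsym with ⟨hA1, hA2⟩ | ⟨hA1, hA2⟩
  · obtain ⟨f, hf3, hf4, hfr, fadj, fgap, fne, fnbr⟩ := exists_window hm H.emb i j hij
    rw [← hA1] at hf3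
    rw [← hA2] at hf4
    exact main_core htri hspot hL hr hlib H.verts hHsub f hfr fadj fgap fnbr x₁ x₂
      (hf3 ▸ ha1) (hf4 ▸ ha2) ha3 (hf4 ▸ hn1) (hf3 ▸ hn2) (hf4 ▸ hne1) (hf3 ▸ hne2) hx₁ hx₂
  · obtain ⟨f, hf3, hf4, hfr, fadj, fgap, fne, fnbr⟩ := exists_window hm H.emb j i hij.symm
    rw [← hA1] at hf3
    rw [← hA2] at hf4
    exact main_core htri hspot hL hr hlib H.verts hHsub f hfr fadj fgap fnbr x₁ x₂
      (hf3 ▸ ha1) (hf4 ▸ ha2) ha3 (hf4 ▸ hn1) (hf3 ▸ hn2) (hf4 ▸ hne1) (hf3 ▸ hne2) hx₁ hx₂
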